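/- Let R = ℂ[x,y] and ∂ = λ·x·(∂/∂x) + μ·y·(∂/∂y) with λ, μ not both zero and λ/μ irrational over ℚ (aλ + bμ = 0 with a,b ∈ ℤ implies a = b = 0). Then ∂ has no rational first integral: the only f ∈ ℂ(x,y) with ∂(f) = 0 are the constants. -/

import Mathlib

open MvPolynomial

private noncomputable def DD (l m : ℂ) : Derivation ℂ (MvPolynomial (Fin 2) ℂ) (MvPolynomial (Fin 2) ℂ) :=
  mkDerivation ℂ (fun i : Fin 2 => (if i = 0 then l else m) • X i)

private def ww (l m : ℂ) (s : Fin 2 →₀ ℕ) : ℂ := s 0 * l + s 1 * m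

private theorem DD_monomial (l m : ℂ) (s : Fin 2 →₀ ℕ) (c : ℂ) :
    DD l m (monomial s c) = C (ww l m s) * monomial s c := by
  rw [DD, mkDerivation_monomial, Finsupp.sum]
  have h1 : ∀ i ∈ s.support,
      monomial (s - Finsupp.single i 1) ((s i : ℕ) : ℂ) • ((if i = 0 then l else m) • X i)
        = ((s i : ℂ) * (if i = 0 then l else m)) • monomial s (1 : ℂ) := by
    intro i hi
    have hle : Finsupp.single i 1 ≤ s := by
      rw [Finsupp.single_le_iff]
      exact Nat.one_le_iff_ne_zero.mpr (Finsupp.mem_support_iff.mp hi)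
    rw [smul_comm, smul_eq_mul, X, monomial_mul, tsub_add_cancel_of_le hle, mul_one]
    simp [smul_monomial, smul_smul, mul_comm]
  rw [Finset.sum_congr rfl h1, ← Finset.sum_smul]
  have h2 : (∑ i ∈ s.support, (s i : ℂ) * (if i = 0 then l else m)) = ww l m s := by
    rw [Finset.sum_subset (Finset.subset_univ s.support)]
    · simp [Fin.sum_univ_two, ww]
    · intro i _ hi
      simp [Finsupp.notMem_support_iff.mp hi]
  rw [h2]
  simp [smul_monomial, C_mul_monomial, smul_eq_mul, mul_comm]

private theorem DD_coeff (l m : ℂ) (p : MvPolynomial (Fin 2) ℂ) (s : Fin 2 →₀ ℕ) :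
    coeff s (DD l m p) = ww l m s * coeff s p := by
  conv_lhs => rw [p.as_sum, map_sum, Finset.sum_congr rfl (fun t _ => DD_monomial l m t _)]
  rw [coeff_sum]
  simp only [coeff_C_mul, coeff_monomial]
  rcases Finset.decidableMem s p.support with hs | hs
  · rw [Finset.sum_eq_zero, notMem_support_iff.mp hs, mul_zero]
    intro t ht
    have : t ≠ s := fun h => hs (h ▸ ht)
    simp [this]
  · rw [Finset.sum_eq_single s (fun t _ ht => by simp [ht]) (fun h => absurd hs h)]
    simp

private theorem ww_inj (l m : ℂ)
    (hirr : ∀ a b : ℤ, (a : ℂ) * l + (b : ℂ) * m = 0 → a = 0 ∧ b = 0)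
    {s t : Fin 2 →₀ ℕ} (h : ww l m s = ww l m t) : s = t := by
  have h2 := hirr ((s 0 : ℤ) - (t 0 : ℤ)) ((s 1 : ℤ) - (t 1 : ℤ)) (by
    push_cast
    rw [ww, ww] at h
    linear_combination h)
  have h3 : (s 0 : ℤ) = t 0 := by omega
  have h4 : (s 1 : ℤ) = t 1 := by omega
  ext i
  fin_cases i
  · exact_mod_cast h3
  · exact_mod_cast h4

private theorem eigen (l m : ℂ)
    (hirr : ∀ a b : ℤ, (a : ℂ) * l + (b : ℂ) * m = 0 → a = 0 ∧ b = 0)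
    {h : MvPolynomial (Fin 2) ℂ} (hh : h ≠ 0) {c : ℂ} (he : DD l m h = C c * h) :
    ∃ s γ, γ ≠ 0 ∧ h = monomial s γ ∧ ww l m s = c := by
  obtain ⟨s₀, hs₀⟩ := support_nonempty.mpr hh
  have key : ∀ s ∈ h.support, ww l m s = c := by
    intro s hs
    have := congrArg (coeff s) he
    rw [DD_coeff, coeff_C_mul] at this
    exact mul_right_cancel₀ (mem_support_iff.mp hs) this
  refine ⟨s₀, coeff s₀ h, mem_support_iff.mp hs₀, ?_, key s₀ hs₀⟩
  ext t
  rw [coeff_monomial]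
  by_cases hts : s₀ = t
  · simp [hts]
  · rw [if_neg hts]
    by_contra hc
    have ht : t ∈ h.support := mem_support_iff.mpr hc
    exact hts (ww_inj l m hirr ((key s₀ hs₀).trans (key t ht).symm))

open AddMonoidAlgebra in
private theorem r_is_C {q r : MvPolynomial (Fin 2) ℂ} (hq : q ≠ 0) (hr : r ≠ 0)
    (hsub : (q * r).support ⊆ q.support) : ∃ c : ℂ, r = C c := by
  have hD : Function.Injective (toLex : (Fin 2 →₀ ℕ) → Lex (Fin 2 →₀ ℕ)) := toLex.injective
  have hmul : (q * r).supDegree toLex = q.supDegree toLex + r.supDegree toLex := by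
    refine supDegree_mul hD toLex_add (mul_ne_zero ?_ ?_) hq hr
    · exact fun H => hq ((leadingCoeff_eq_zero hD).mp H)
    · exact fun H => hr ((leadingCoeff_eq_zero hD).mp H)
  have hle : (q * r).supDegree toLex ≤ q.supDegree toLex := Finset.sup_mono hsub
  rw [hmul] at hle
  have hr0 : r.supDegree toLex ≤ 0 := by
    have := le_of_add_le_add_left (a := q.supDegree toLex)
      (by simpa using hle : q.supDegree toLex + r.supDegree toLex ≤ q.supDegree toLex + 0)
    exact this
  refine ⟨MvPolynomial.coeff 0 r, ?_⟩
  ext t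
  rw [coeff_C]
  by_cases ht : (0 : Fin 2 →₀ ℕ) = t
  · simp [ht]
  · rw [if_neg ht]
    by_contra hc
    have htm : t ∈ r.support := mem_support_iff.mpr hc
    have h1 : toLex t ≤ 0 := le_trans (Finset.le_sup htm) hr0
    have h2 : (0 : Lex (Fin 2 →₀ ℕ)) ≤ toLex t := bot_le
    exact ht (hD (le_antisymm h1 h2).symm)

private theorem DD_X (l m : ℂ) (i : Fin 2) :
    DD l m (X i) = (if i = 0 then l else m) • X i := mkDerivation_X _ _ _

set_option synthInstance.maxHeartbeats 1000000 in
set_option maxHeartbeats 1000000 in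
/-- If `(λ,μ) ≠ (0,0)` and `aλ + bμ = 0` with integers `a,b` forces `a = b = 0`, then
the derivation of `ℂ(x,y)` with `∂x = λx`, `∂y = μy` has no rational first integral:
the only `f` with `∂f = 0` are the constants. -/
theorem stmt_14 (l m : ℂ) (hlm : (l, m) ≠ (0, 0))
    (hirr : ∀ a b : ℤ, (a : ℂ) * l + (b : ℂ) * m = 0 → a = 0 ∧ b = 0)
    (d : Derivation ℂ (FractionRing (MvPolynomial (Fin 2) ℂ))
      (FractionRing (MvPolynomial (Fin 2) ℂ)))
    (x y : FractionRing (MvPolynomial (Fin 2) ℂ))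
    (hx : x = algebraMap (MvPolynomial (Fin 2) ℂ) _ (X 0))
    (hy : y = algebraMap (MvPolynomial (Fin 2) ℂ) _ (X 1))
    (hdx : d x = algebraMap ℂ _ l * x) (hdy : d y = algebraMap ℂ _ m * y) :
    ∀ f : FractionRing (MvPolynomial (Fin 2) ℂ), d f = 0 →
      ∃ c : ℂ, f = algebraMap ℂ _ c := by
  intro f hf
  have h01 : ∀ j : Fin 2, j = 0 ∨ j = 1 := by decide
  -- the derivation `d` agrees with `DD l m` on polynomials
  have hbridge : ∀ p : MvPolynomial (Fin 2) ℂ,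
      d (algebraMap _ (FractionRing (MvPolynomial (Fin 2) ℂ)) p)
        = algebraMap _ _ (DD l m p) := by
    have h0 : d.compAlgebraMap (MvPolynomial (Fin 2) ℂ) =
        (Algebra.linearMap (MvPolynomial (Fin 2) ℂ)
          (FractionRing (MvPolynomial (Fin 2) ℂ))).compDer (DD l m) := by
      apply derivation_ext
      intro i
      rw [Derivation.compAlgebraMap_apply]
      have hc : ((Algebra.linearMap (MvPolynomial (Fin 2) ℂ)
          (FractionRing (MvPolynomial (Fin 2) ℂ))).compDer (DD l m)) (X i)
          = algebraMap (MvPolynomial (Fin 2) ℂ) _ (DD l m (X i)) := rfl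
      rw [hc, DD_X]
      rcases h01 i with rfl | rfl
      · rw [if_pos rfl, ← hx, hdx, smul_eq_C_mul, map_mul, ← MvPolynomial.algebraMap_eq,
          ← IsScalarTower.algebraMap_apply, hx]
      · rw [if_neg (by decide), ← hy, hdy, smul_eq_C_mul, map_mul, ← MvPolynomial.algebraMap_eq,
          ← IsScalarTower.algebraMap_apply, hy]
    intro p
    have := congrArg (fun D => D p) h0
    simpa using this
  -- write `f` as a reduced fraction `p / q`
  obtain ⟨p, qq, hrel, hmk⟩ :=
    IsFractionRing.exists_reduced_fraction (MvPolynomial (Fin 2) ℂ) f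
  have hq0 : (qq : MvPolynomial (Fin 2) ℂ) ≠ 0 := mem_nonZeroDivisors_iff_ne_zero.mp qq.2
  have haq0 : algebraMap (MvPolynomial (Fin 2) ℂ) (FractionRing (MvPolynomial (Fin 2) ℂ))
      (qq : MvPolynomial (Fin 2) ℂ) ≠ 0 :=
    IsFractionRing.to_map_ne_zero_of_mem_nonZeroDivisors qq.2
  have hfq : f * algebraMap _ _ (qq : MvPolynomial (Fin 2) ℂ) = algebraMap _ _ p := by
    rw [← hmk]; exact IsLocalization.mk'_spec _ p qq
  -- differentiate the relation
  have h5 : f * algebraMap _ _ (DD l m qq) = algebraMap _ _ (DD l m p) := by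
    have h6 := congrArg d hfq
    rw [d.leibniz, hf, smul_zero, add_zero, hbridge, hbridge, smul_eq_mul] at h6
    exact h6
  have hkey : (qq : MvPolynomial (Fin 2) ℂ) * DD l m p = p * DD l m qq := by
    apply IsFractionRing.injective (MvPolynomial (Fin 2) ℂ)
      (FractionRing (MvPolynomial (Fin 2) ℂ))
    rw [map_mul, map_mul, ← h5, ← hfq]
    ring
  -- `q` divides `D q`, hence `q` is an eigenvector
  have hdvd : (qq : MvPolynomial (Fin 2) ℂ) ∣ DD l m qq :=
    (hrel.symm).dvd_of_dvd_mul_left ⟨DD l m p, hkey.symm⟩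
  obtain ⟨r, hr⟩ := hdvd
  have hec : ∃ c : ℂ, DD l m (qq : MvPolynomial (Fin 2) ℂ)
      = C c * (qq : MvPolynomial (Fin 2) ℂ) := by
    rcases eq_or_ne r 0 with rfl | hrne
    · exact ⟨0, by rw [hr]; simp⟩
    · have hsub : ((qq : MvPolynomial (Fin 2) ℂ) * r).support
          ⊆ (qq : MvPolynomial (Fin 2) ℂ).support := by
        intro s hs
        rw [← hr] at hs
        rw [mem_support_iff, DD_coeff] at hs
        exact mem_support_iff.mpr (right_ne_zero_of_mul hs)
      obtain ⟨c, hcr⟩ := r_is_C hq0 hrne hsub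
      exact ⟨c, by rw [hr, hcr, mul_comm]⟩
  obtain ⟨c, hc⟩ := hec
  obtain ⟨s₀, γ, hγ, hqm, hws₀⟩ := eigen l m hirr hq0 hc
  have hdp : DD l m p = C c * p :=
    mul_left_cancel₀ hq0 (by rw [hkey, hc]; ring)
  rcases eq_or_ne p 0 with rfl | hp0
  · refine ⟨0, ?_⟩
    rw [map_zero]
    rcases mul_eq_zero.mp (by rw [hfq, map_zero]) with h | h
    · exact h
    · exact absurd h haq0
  · obtain ⟨s₁, δ, hδ, hpm, hws₁⟩ := eigen l m hirr hp0 hdp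
    have hss : s₁ = s₀ := ww_inj l m hirr (hws₁.trans hws₀.symm)
    subst hss
    refine ⟨δ * γ⁻¹, ?_⟩
    have hpq : p = C (δ * γ⁻¹) * (qq : MvPolynomial (Fin 2) ℂ) := by
      rw [hpm, hqm, C_mul_monomial]
      congr 1
      field_simp
    apply mul_right_cancel₀ haq0
    rw [hfq, hpq, map_mul, ← MvPolynomial.algebraMap_eq, ← IsScalarTower.algebraMap_apply]
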